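/- The spatial gradient of the value function U is bounded: for every t > 0 and every z ≥ c one has −1 ≤ ∂_z U(t,z) ≤ 0, where ∂_z U(t,z) = ∂_x ψ(t, z−c)/(β·ψ(t, z−c)). In particular, z ↦ U(t,z) is nonincreasing and 1-Lipschitz on [c,∞) for each fixed t > 0. -/

import Mathlib

open MeasureTheory intervalIntegral Real

open MeasureTheory intervalIntegral Real

lemma erf_hasDerivAt (erf : ℝ → ℝ)
    (herf : ∀ x : ℝ, erf x = (2 / Real.sqrt Real.pi) * ∫ y in (0:ℝ)..x, Real.exp (-y ^ 2))
    (x : ℝ) : HasDerivAt erf (2 / Real.sqrt Real.pi * Real.exp (-x ^ 2)) x := by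
  have hc : Continuous fun y : ℝ => Real.exp (-y ^ 2) := by continuity
  have h1 : HasDerivAt (fun u => ∫ y in (0:ℝ)..u, Real.exp (-y ^ 2)) (Real.exp (-x ^ 2)) x :=
    intervalIntegral.integral_hasDerivAt_right (hc.intervalIntegrable _ _)
      (hc.stronglyMeasurableAtFilter _ _) hc.continuousAt
  have he : erf = fun u => (2 / Real.sqrt Real.pi) * ∫ y in (0:ℝ)..u, Real.exp (-y ^ 2) :=
    funext herf
  rw [he]
  exact h1.const_mul _

lemma gauss_int_lt (x : ℝ) :
    (∫ y in (0:ℝ)..x, Real.exp (-y ^ 2)) < Real.sqrt Real.pi / 2 := by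
  have hc : Continuous fun y : ℝ => Real.exp (-y ^ 2) := by continuity
  have hnn : ∀ y : ℝ, 0 ≤ Real.exp (-y ^ 2) := fun y => (Real.exp_pos _).le
  have hIoi : (∫ y in Set.Ioi (0:ℝ), Real.exp (-y ^ 2)) = Real.sqrt Real.pi / 2 := by
    have := integral_gaussian_Ioi 1
    simpa using this
  have hint : MeasureTheory.IntegrableOn (fun y : ℝ => Real.exp (-y ^ 2)) (Set.Ioi 0) := by
    have := integrable_exp_neg_mul_sq (one_pos)
    simpa using this.integrableOn
  have key : ∀ m : ℝ, 0 ≤ m →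
      (∫ y in (0:ℝ)..m, Real.exp (-y ^ 2)) < Real.sqrt Real.pi / 2 := by
    intro m hm
    have hpos : (0:ℝ) < ∫ y in m..(m+1), Real.exp (-y ^ 2) :=
      intervalIntegral_pos_of_pos (hc.intervalIntegrable _ _)
        (fun y => Real.exp_pos _) (by linarith)
    have hadd : (∫ y in (0:ℝ)..m, Real.exp (-y ^ 2)) + ∫ y in m..(m+1), Real.exp (-y ^ 2)
        = ∫ y in (0:ℝ)..(m+1), Real.exp (-y ^ 2) :=
      intervalIntegral.integral_add_adjacent_intervals (hc.intervalIntegrable _ _)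
        (hc.intervalIntegrable _ _)
    have hle : (∫ y in (0:ℝ)..(m+1), Real.exp (-y ^ 2)) ≤ Real.sqrt Real.pi / 2 := by
      rw [intervalIntegral.integral_of_le (by linarith), ← hIoi]
      apply MeasureTheory.setIntegral_mono_set hint
        (Filter.Eventually.of_forall fun y => hnn y)
      exact Filter.Eventually.of_forall (Set.Ioc_subset_Ioi_self)
    linarith
  rcases le_or_gt x 0 with hx | hx
  · have h0 : (∫ y in (0:ℝ)..x, Real.exp (-y ^ 2)) ≤ 0 := by
      rw [intervalIntegral.integral_symm]
      simp only [neg_nonpos]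
      exact intervalIntegral.integral_nonneg hx fun y _ => hnn y
    have hπ : 0 < Real.sqrt Real.pi := Real.sqrt_pos.mpr Real.pi_pos
    linarith
  · exact key x hx.le

lemma erf_lt_one (erf : ℝ → ℝ)
    (herf : ∀ x : ℝ, erf x = (2 / Real.sqrt Real.pi) * ∫ y in (0:ℝ)..x, Real.exp (-y ^ 2))
    (x : ℝ) : erf x < 1 := by
  rw [herf]
  have hπ : 0 < Real.sqrt Real.pi := Real.sqrt_pos.mpr Real.pi_pos
  have h := gauss_int_lt x
  have : 2 / Real.sqrt Real.pi * (∫ y in (0:ℝ)..x, Real.exp (-y ^ 2))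
      < 2 / Real.sqrt Real.pi * (Real.sqrt Real.pi / 2) :=
    mul_lt_mul_of_pos_left h (by positivity)
  calc 2 / Real.sqrt Real.pi * (∫ y in (0:ℝ)..x, Real.exp (-y ^ 2))
      < 2 / Real.sqrt Real.pi * (Real.sqrt Real.pi / 2) := this
    _ = 1 := by field_simp

lemma erf_nonneg (erf : ℝ → ℝ)
    (herf : ∀ x : ℝ, erf x = (2 / Real.sqrt Real.pi) * ∫ y in (0:ℝ)..x, Real.exp (-y ^ 2))
    {x : ℝ} (hx : 0 ≤ x) : 0 ≤ erf x := by
  rw [herf]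
  have : 0 ≤ ∫ y in (0:ℝ)..x, Real.exp (-y ^ 2) :=
    intervalIntegral.integral_nonneg hx fun y _ => (Real.exp_pos _).le
  positivity

lemma psi_hasDerivAt (σ β t : ℝ) (hσ : 0 < σ) (ht : 0 < t)
    (erf : ℝ → ℝ)
    (herf : ∀ x : ℝ, erf x = (2 / Real.sqrt Real.pi) * ∫ y in (0:ℝ)..x, Real.exp (-y ^ 2))
    (x : ℝ) :
    HasDerivAt (fun x => erf (x / (σ * Real.sqrt (2 * t))) +
        Real.exp (-β * x + β ^ 2 * σ ^ 2 * t / 2) *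
          (1 - erf (x / (σ * Real.sqrt (2 * t)) - β * σ * Real.sqrt t / Real.sqrt 2)))
      (-β * (Real.exp (-β * x + β ^ 2 * σ ^ 2 * t / 2) *
          (1 - erf (x / (σ * Real.sqrt (2 * t)) - β * σ * Real.sqrt t / Real.sqrt 2)))) x := by
  set d := σ * Real.sqrt (2 * t) with hd_def
  set a := β * σ * Real.sqrt t / Real.sqrt 2 with ha_def
  set C := β ^ 2 * σ ^ 2 * t / 2 with hC_def
  have hd : 0 < d := by
    have : 0 < Real.sqrt (2 * t) := Real.sqrt_pos.mpr (by linarith)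
    positivity
  have h2 : Real.sqrt 2 ^ 2 = 2 := Real.sq_sqrt (by norm_num)
  have hst : Real.sqrt t ^ 2 = t := Real.sq_sqrt ht.le
  have hsd : Real.sqrt (2 * t) = Real.sqrt 2 * Real.sqrt t := Real.sqrt_mul (by norm_num) t
  have hr0 : (0:ℝ) < Real.sqrt 2 := by positivity
  have hs0 : (0:ℝ) < Real.sqrt t := Real.sqrt_pos.mpr ht
  have ha2 : a ^ 2 = C := by
    rw [ha_def, hC_def, div_pow, h2, mul_pow, mul_pow, hst]
  have had : 2 * a / d = β := by
    rw [ha_def, hd_def, hsd]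
    field_simp
    ring_nf
    linear_combination (-β) * h2
  -- derivative pieces
  have h1 : HasDerivAt (fun y : ℝ => y / d) (1 / d) x := by
    simpa using (hasDerivAt_id x).div_const d
  have herf1 : HasDerivAt (fun y => erf (y / d))
      (2 / Real.sqrt Real.pi * Real.exp (-(x / d) ^ 2) * (1 / d)) x :=
    (erf_hasDerivAt erf herf (x / d)).comp x h1
  have hin2 : HasDerivAt (fun y : ℝ => y / d - a) (1 / d) x := h1.sub_const a
  have herf2 : HasDerivAt (fun y => erf (y / d - a))
      (2 / Real.sqrt Real.pi * Real.exp (-(x / d - a) ^ 2) * (1 / d)) x :=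
    (erf_hasDerivAt erf herf (x / d - a)).comp x hin2
  have h3 : HasDerivAt (fun y : ℝ => 1 - erf (y / d - a))
      (-(2 / Real.sqrt Real.pi * Real.exp (-(x / d - a) ^ 2) * (1 / d))) x :=
    herf2.const_sub 1
  have hexp : HasDerivAt (fun y : ℝ => Real.exp (-β * y + C))
      (Real.exp (-β * x + C) * (-β * 1)) x := by
    simpa using (((hasDerivAt_id x).const_mul (-β)).add_const C).exp
  have htot := herf1.add (hexp.mul h3)
  have hkey : Real.exp (-β * x + C) * Real.exp (-(x / d - a) ^ 2)
      = Real.exp (-(x / d) ^ 2) := by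
    rw [← Real.exp_add]
    congr 1
    linear_combination x * had - ha2
  refine HasDerivAt.congr_deriv htot ?_
  have expand : 2 / Real.sqrt Real.pi * Real.exp (-(x / d) ^ 2) * (1 / d) +
      (Real.exp (-β * x + C) * (-β * 1) * (1 - erf (x / d - a)) +
        Real.exp (-β * x + C) * -(2 / Real.sqrt Real.pi * Real.exp (-(x / d - a) ^ 2) * (1 / d)))
      = -β * (Real.exp (-β * x + C) * (1 - erf (x / d - a))) +
        (2 / Real.sqrt Real.pi * (1 / d)) *
          (Real.exp (-(x / d) ^ 2) - Real.exp (-β * x + C) * Real.exp (-(x / d - a) ^ 2)) := by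
    ring
  rw [expand, hkey]
  ring


/-- The spatial gradient of U is bounded: for every t > 0 and z ≥ c one
has −1 ≤ ∂_z U(t,z) ≤ 0, where ∂_z U(t,z) = ∂_x ψ(t, z−c)/(β·ψ(t, z−c)).
In particular, z ↦ U(t,z) is nonincreasing and 1-Lipschitz on [c,∞) for each t > 0. -/
theorem U_gradient_bounded
    (σ γ κ c : ℝ) (hσ : 0 < σ) (hγ : 0 < γ) (hκ : 0 < κ)
    (β : ℝ) (hβ : β = γ ^ 2 / (2 * κ * σ ^ 2))
    (erf : ℝ → ℝ)
    (herf : ∀ x : ℝ, erf x = (2 / Real.sqrt Real.pi) * ∫ y in (0:ℝ)..x, Real.exp (-y ^ 2))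
    (ψ : ℝ → ℝ → ℝ)
    (hψ : ∀ t x : ℝ, ψ t x =
      erf (x / (σ * Real.sqrt (2 * t))) +
        Real.exp (-β * x + β ^ 2 * σ ^ 2 * t / 2) *
          (1 - erf (x / (σ * Real.sqrt (2 * t)) - β * σ * Real.sqrt t / Real.sqrt 2)))
    (U : ℝ → ℝ → ℝ)
    (hU : ∀ t z : ℝ, U t z = (1 / β) * Real.log (ψ t (z - c))) :
    ∀ t : ℝ, 0 < t →
      (∀ z : ℝ, c ≤ z →
        deriv (fun w => U t w) z = deriv (fun y => ψ t y) (z - c) / (β * ψ t (z - c)) ∧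
        -1 ≤ deriv (fun w => U t w) z ∧ deriv (fun w => U t w) z ≤ 0) ∧
      AntitoneOn (fun z => U t z) (Set.Ici c) ∧
      LipschitzOnWith 1 (fun z => U t z) (Set.Ici c) := by
  intro t ht
  have hd : 0 < σ * Real.sqrt (2 * t) := by
    have : 0 < Real.sqrt (2 * t) := Real.sqrt_pos.mpr (by linarith)
    positivity
  have hβpos : 0 < β := by rw [hβ]; positivity
  have hβ0 : β ≠ 0 := ne_of_gt hβpos
  have hψfun : (fun y => ψ t y) = (fun x => erf (x / (σ * Real.sqrt (2 * t))) +
      Real.exp (-β * x + β ^ 2 * σ ^ 2 * t / 2) *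
        (1 - erf (x / (σ * Real.sqrt (2 * t)) - β * σ * Real.sqrt t / Real.sqrt 2))) :=
    funext fun x => hψ t x
  have hψD : ∀ x : ℝ, HasDerivAt (fun y => ψ t y)
      (-β * (Real.exp (-β * x + β ^ 2 * σ ^ 2 * t / 2) *
        (1 - erf (x / (σ * Real.sqrt (2 * t)) - β * σ * Real.sqrt t / Real.sqrt 2)))) x := by
    intro x; rw [hψfun]; exact psi_hasDerivAt σ β t hσ ht erf herf x
  have hNpos : ∀ x : ℝ, 0 < Real.exp (-β * x + β ^ 2 * σ ^ 2 * t / 2) *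
      (1 - erf (x / (σ * Real.sqrt (2 * t)) - β * σ * Real.sqrt t / Real.sqrt 2)) := by
    intro x
    have := erf_lt_one erf herf (x / (σ * Real.sqrt (2 * t)) - β * σ * Real.sqrt t / Real.sqrt 2)
    have := Real.exp_pos (-β * x + β ^ 2 * σ ^ 2 * t / 2)
    nlinarith
  have hψpos : ∀ x : ℝ, 0 ≤ x → 0 < ψ t x := by
    intro x hx
    rw [hψ t x]
    have hM : 0 ≤ erf (x / (σ * Real.sqrt (2 * t))) := erf_nonneg erf herf (by positivity)
    linarith [hNpos x]
  have hUfun : (fun w => U t w) = fun w => (1 / β) * Real.log (ψ t (w - c)) :=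
    funext fun w => hU t w
  have hUD : ∀ z : ℝ, c ≤ z → HasDerivAt (fun w => U t w)
      ((1 / β) * (-β * (Real.exp (-β * (z - c) + β ^ 2 * σ ^ 2 * t / 2) *
        (1 - erf ((z - c) / (σ * Real.sqrt (2 * t)) - β * σ * Real.sqrt t / Real.sqrt 2))) * 1 /
          ψ t (z - c))) z := by
    intro z hz
    rw [hUfun]
    have h1 : HasDerivAt (fun w : ℝ => w - c) 1 z := (hasDerivAt_id z).sub_const c
    have h2 := (hψD (z - c)).comp z h1
    have h3 := (h2.log (ne_of_gt (hψpos _ (by show (0:ℝ) ≤ z - c; linarith)))).const_mul (1 / β)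
    simpa [Function.comp] using h3
  have main : ∀ z : ℝ, c ≤ z →
      deriv (fun w => U t w) z = deriv (fun y => ψ t y) (z - c) / (β * ψ t (z - c)) ∧
      -1 ≤ deriv (fun w => U t w) z ∧ deriv (fun w => U t w) z ≤ 0 := by
    intro z hz
    have hx : (0:ℝ) ≤ z - c := by linarith
    set N := Real.exp (-β * (z - c) + β ^ 2 * σ ^ 2 * t / 2) *
      (1 - erf ((z - c) / (σ * Real.sqrt (2 * t)) - β * σ * Real.sqrt t / Real.sqrt 2)) with hN_def
    have hN : 0 < N := hNpos (z - c)
    have hM : 0 ≤ erf ((z - c) / (σ * Real.sqrt (2 * t))) := erf_nonneg erf herf (by positivity)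
    have hψval : ψ t (z - c) = erf ((z - c) / (σ * Real.sqrt (2 * t))) + N := hψ t (z - c)
    have hψp : 0 < ψ t (z - c) := hψpos _ hx
    have hNle : N ≤ ψ t (z - c) := by rw [hψval]; linarith
    have hderivU : deriv (fun w => U t w) z = (1 / β) * (-β * N * 1 / ψ t (z - c)) :=
      (hUD z hz).deriv
    have hderivψ : deriv (fun y => ψ t y) (z - c) = -β * N := (hψD (z - c)).deriv
    have hval : (1 / β) * (-β * N * 1 / ψ t (z - c)) = -(N / ψ t (z - c)) := by
      field_simp
    refine ⟨?_, ?_, ?_⟩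
    · rw [hderivU, hderivψ, hval, eq_div_iff (ne_of_gt (mul_pos hβpos hψp))]
      field_simp
      all_goals ring
    · rw [hderivU, hval]
      have : N / ψ t (z - c) ≤ 1 := (div_le_one hψp).mpr hNle
      linarith
    · rw [hderivU, hval]
      have : 0 ≤ N / ψ t (z - c) := le_of_lt (div_pos hN hψp)
      linarith
  refine ⟨main, ?_, ?_⟩
  · refine antitoneOn_of_deriv_nonpos (convex_Ici c)
      (fun z hz => (hUD z hz).continuousAt.continuousWithinAt) ?_ ?_
    · intro z hz
      rw [interior_Ici] at hz
      exact ((hUD z (le_of_lt hz)).differentiableAt).differentiableWithinAt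
    · intro z hz
      rw [interior_Ici] at hz
      exact (main z (le_of_lt hz)).2.2
  · refine (convex_Ici c).lipschitzOnWith_of_nnnorm_deriv_le
      (fun z hz => (hUD z hz).differentiableAt) ?_
    intro z hz
    have h := (main z hz).2
    rw [← NNReal.coe_le_coe, coe_nnnorm, Real.norm_eq_abs, NNReal.coe_one]
    exact abs_le.mpr ⟨h.1, le_trans h.2 zero_le_one⟩
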